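/- Let V be an F̄_p-vector space with basis {f_n : n ∈ ℤ} and let T : V → V be the linear operator determined by T f₀ = f₋₁ + λ₀ f₁ and, for n ≠ 0, T f_n = c f_n + f_{n+δ(n)} where δ(n) = 1 if n > 0 and δ(n) = -1 if n < 0, with fixed constants λ₀, c ∈ F̄_p. Then for every nonzero polynomial P over F̄_p, the operator P(T) : V → V is injective. -/

import Mathlib

open Polynomial Finset


section Aux

variable {F : Type*} [Field F] {V : Type*} [AddCommGroup V] [Module F V]
  (b : Module.Basis ℤ F V) (T : Module.End F V) (lam0 c : F)

/-- One-step lemma: support grows by one and the leading coefficients propagate. -/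
lemma hecke_step
    (hT0 : T (b 0) = b (-1) + lam0 • b 1)
    (hTpos : ∀ n : ℤ, 0 < n → T (b n) = c • b n + b (n + 1))
    (hTneg : ∀ n : ℤ, n < 0 → T (b n) = c • b n + b (n - 1))
    (M : ℤ) (hM : 0 ≤ M) (v : V)
    (hsupp : ∀ n : ℤ, M < |n| → b.repr v n = 0) :
    (∀ n : ℤ, M + 1 < |n| → b.repr (T v) n = 0) ∧
      b.repr (T v) (M + 1) = (if M = 0 then lam0 else 1) * b.repr v M ∧
      b.repr (T v) (-(M + 1)) = b.repr v (-M) := by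
  classical
  have hmem : ∀ n ∈ (b.repr v).support, -M ≤ n ∧ n ≤ M := by
    intro n hn
    rw [Finsupp.mem_support_iff] at hn
    by_contra hc
    exact hn (hsupp n (by rw [lt_abs]; omega))
  have hTv : T v = ∑ n ∈ (b.repr v).support, b.repr v n • T (b n) := by
    conv_lhs => rw [← b.linearCombination_repr v]
    rw [Finsupp.linearCombination_apply, Finsupp.sum, map_sum]
    simp
  have hrepr : ∀ m : ℤ, b.repr (T v) m
      = ∑ n ∈ (b.repr v).support, b.repr v n * b.repr (T (b n)) m := by
    intro m
    rw [hTv, map_sum, Finsupp.finset_sum_apply]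
    simp [Finsupp.smul_apply]
  have hbn : ∀ n m : ℤ, b.repr (T (b n)) m =
      if n = 0 then (if -1 = m then 1 else 0) + lam0 * (if 1 = m then 1 else 0)
      else if 0 < n then c * (if n = m then 1 else 0) + (if n + 1 = m then 1 else 0)
      else c * (if n = m then 1 else 0) + (if n - 1 = m then 1 else 0) := by
    intro n m
    rcases lt_trichotomy n 0 with h | h | h
    · rw [if_neg (by omega), if_neg (by omega), hTneg n h]
      simp [Finsupp.single_apply]
    · subst h
      rw [if_pos rfl, hT0]
      simp [Finsupp.single_apply]
    · rw [if_neg (by omega), if_pos h, hTpos n h]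
      simp [Finsupp.single_apply]
  refine ⟨?_, ?_, ?_⟩
  · intro m hm
    rw [lt_abs] at hm
    rw [hrepr]
    apply Finset.sum_eq_zero
    intro n hn
    obtain ⟨h1, h2⟩ := hmem n hn
    rw [hbn]
    rcases lt_trichotomy n 0 with h | h | h
    · rw [if_neg (by omega), if_neg (by omega), if_neg (by omega), if_neg (by omega)]
      ring
    · rw [if_pos h, if_neg (by omega), if_neg (by omega)]
      ring
    · rw [if_neg (by omega), if_pos h, if_neg (by omega), if_neg (by omega)]
      ring
  · rw [hrepr]
    by_cases hM0 : M = 0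
    · subst hM0
      rw [Finset.sum_eq_single 0]
      · rw [hbn]
        norm_num
        ring
      · intro n hn hne
        obtain ⟨h1, h2⟩ := hmem n hn; omega
      · intro h
        rw [Finsupp.notMem_support_iff] at h
        rw [h]; ring
    · rw [if_neg hM0]
      have hM1 : 1 ≤ M := by omega
      rw [Finset.sum_eq_single M]
      · rw [hbn, if_neg (by omega), if_pos (by omega), if_neg (by omega), if_pos rfl]
        ring
      · intro n hn hne
        obtain ⟨h1, h2⟩ := hmem n hn
        rw [hbn]
        rcases lt_trichotomy n 0 with h | h | h
        · rw [if_neg (by omega), if_neg (by omega), if_neg (by omega), if_neg (by omega)]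
          ring
        · rw [if_pos h, if_neg (by omega), if_neg (by omega)]
          ring
        · rw [if_neg (by omega), if_pos h, if_neg (by omega), if_neg (by omega)]
          ring
      · intro h
        rw [Finsupp.notMem_support_iff] at h
        rw [h]; ring
  · rw [hrepr]
    by_cases hM0 : M = 0
    · subst hM0
      rw [Finset.sum_eq_single 0]
      · rw [hbn]
        norm_num
      · intro n hn hne
        obtain ⟨h1, h2⟩ := hmem n hn; omega
      · intro h
        rw [Finsupp.notMem_support_iff] at h
        rw [h]; ring
    · have hM1 : 1 ≤ M := by omega
      rw [Finset.sum_eq_single (-M)]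
      · rw [hbn, if_neg (by omega), if_neg (by omega), if_neg (by omega), if_pos (by omega)]
        ring
      · intro n hn hne
        obtain ⟨h1, h2⟩ := hmem n hn
        rw [hbn]
        rcases lt_trichotomy n 0 with h | h | h
        · rw [if_neg (by omega), if_neg (by omega), if_neg (by omega), if_neg (by omega)]
          ring
        · rw [if_pos h, if_neg (by omega), if_neg (by omega)]
          ring
        · rw [if_neg (by omega), if_pos h, if_neg (by omega), if_neg (by omega)]
          ring
      · intro h
        rw [Finsupp.notMem_support_iff] at h
        rw [h]; ring

lemma hecke_iter
    (hT0 : T (b 0) = b (-1) + lam0 • b 1)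
    (hTpos : ∀ n : ℤ, 0 < n → T (b n) = c • b n + b (n + 1))
    (hTneg : ∀ n : ℤ, n < 0 → T (b n) = c • b n + b (n - 1))
    (M : ℤ) (hM : 0 ≤ M) (v : V)
    (hsupp : ∀ n : ℤ, M < |n| → b.repr v n = 0)
    (hlead : b.repr v M ≠ 0 ∨ b.repr v (-M) ≠ 0) :
    ∀ i : ℕ, (∀ n : ℤ, M + i < |n| → b.repr ((T ^ i) v) n = 0) ∧
      (b.repr ((T ^ i) v) (M + i) ≠ 0 ∨ b.repr ((T ^ i) v) (-(M + i)) ≠ 0) := by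
  intro i
  induction i with
  | zero => simpa using ⟨hsupp, hlead⟩
  | succ i ih =>
    have hTi : (T ^ (i + 1)) v = T ((T ^ i) v) := by
      rw [pow_succ']; rfl
    obtain ⟨hs, hl⟩ := ih
    obtain ⟨hs', hl1, hl2⟩ := hecke_step b T lam0 c hT0 hTpos hTneg (M + i) (by positivity) _ hs
    constructor
    · intro n hn
      rw [hTi]
      apply hs'
      push_cast at hn ⊢
      omega
    · rw [hTi]
      have e1 : M + (i + 1 : ℕ) = M + i + 1 := by push_cast; ring
      rw [e1]
      rcases hl with hl | hl
      · by_cases h0 : M + (i : ℤ) = 0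
        · right
          rw [hl2, h0, neg_zero]
          rwa [h0] at hl
        · left
          rw [hl1, if_neg h0, one_mul]
          exact hl
      · right
        rw [hl2]
        exact hl

end Aux

/-- let `V` be an `F̄_p`-vector space with basis `{f_n : n ∈ ℤ}` and `T` the
linear operator with `T f₀ = f₋₁ + λ₀ f₁` and `T f_n = c f_n + f_{n+δ(n)}` for `n ≠ 0`
(`δ(n) = ±1` according to the sign of `n`). Then for every nonzero polynomial `P`,
the operator `P(T)` is injective. -/
theorem hecke_polynomial_injective
    (p : ℕ) [Fact p.Prime] {F : Type*} [Field F] [CharP F p] [IsAlgClosed F]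
    {V : Type*} [AddCommGroup V] [Module F V]
    (b : Module.Basis ℤ F V) (T : Module.End F V) (lam0 c : F)
    (hT0 : T (b 0) = b (-1) + lam0 • b 1)
    (hTpos : ∀ n : ℤ, 0 < n → T (b n) = c • b n + b (n + 1))
    (hTneg : ∀ n : ℤ, n < 0 → T (b n) = c • b n + b (n - 1)) :
    ∀ P : Polynomial F, P ≠ 0 → Function.Injective ⇑(Polynomial.aeval T P) := by
  classical
  intro P hP
  rw [← LinearMap.ker_eq_bot, LinearMap.ker_eq_bot']
  intro v hv
  by_contra hv0
  -- find the degree M of v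
  have hsne : (b.repr v).support.Nonempty := by
    rw [Finsupp.support_nonempty_iff]
    intro h
    exact hv0 (by simpa using congrArg b.repr.symm h)
  set s := (b.repr v).support with hs
  set M : ℤ := (s.image (|·|)).max' (hsne.image _) with hMdef
  have hM0 : 0 ≤ M := by
    obtain ⟨n, hn⟩ := hsne
    have := Finset.le_max' (s.image (|·|)) |n| (Finset.mem_image_of_mem _ hn)
    have := abs_nonneg n
    omega
  have hsupp : ∀ n : ℤ, M < |n| → b.repr v n = 0 := by
    intro n hn
    rw [← Finsupp.notMem_support_iff]
    intro hmem
    have := Finset.le_max' (s.image (|·|)) |n| (Finset.mem_image_of_mem _ hmem)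
    omega
  have hlead : b.repr v M ≠ 0 ∨ b.repr v (-M) ≠ 0 := by
    have hMmem : M ∈ s.image (|·|) := Finset.max'_mem _ _
    obtain ⟨n, hn, habs⟩ := Finset.mem_image.mp hMmem
    have hne : b.repr v n ≠ 0 := Finsupp.mem_support_iff.mp hn
    have hcase : n = M ∨ n = -M := by
      rcases abs_cases n with ⟨h1, _⟩ | ⟨h1, _⟩ <;> omega
    rcases hcase with h | h
    · left; rwa [← h]
    · right; rw [← h]; exact hne
  have hiter := hecke_iter b T lam0 c hT0 hTpos hTneg M hM0 v hsupp hlead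
  set d := P.natDegree with hd
  have hx : (Polynomial.aeval T P) v = ∑ i ∈ Finset.range (d + 1), P.coeff i • (T ^ i) v := by
    rw [Polynomial.aeval_eq_sum_range]
    simp [LinearMap.sum_apply, LinearMap.smul_apply, ← hd]
  have hcoeff : ∀ m : ℤ, b.repr ((Polynomial.aeval T P) v) m
      = ∑ i ∈ Finset.range (d + 1), P.coeff i * b.repr ((T ^ i) v) m := by
    intro m
    rw [hx, map_sum, Finsupp.finset_sum_apply]
    simp [Finsupp.smul_apply]
  have hzero : ∀ m : ℤ, M + d ≤ |m| →
      b.repr ((Polynomial.aeval T P) v) m = P.coeff d * b.repr ((T ^ d) v) m := by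
    intro m hm
    rw [hcoeff]
    rw [Finset.sum_eq_single d]
    · intro i hi hne
      rw [Finset.mem_range] at hi
      have hid : i < d := by omega
      rw [(hiter i).1 m (by omega)]
      ring
    · intro h
      exact absurd (Finset.self_mem_range_succ d) h
  have habs : |M + (d : ℤ)| = M + d := abs_of_nonneg (by positivity)
  have hPd : P.coeff d ≠ 0 := by
    have := Polynomial.leadingCoeff_ne_zero.mpr hP
    rwa [Polynomial.leadingCoeff, ← hd] at this
  have h1 : b.repr ((T ^ d) v) (M + d) = 0 := by
    have := hzero (M + d) (by rw [habs])
    rw [hv] at this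
    simp only [map_zero, Finsupp.zero_apply] at this
    rcases mul_eq_zero.mp this.symm with h | h
    · exact absurd h hPd
    · exact h
  have h2 : b.repr ((T ^ d) v) (-(M + d)) = 0 := by
    have := hzero (-(M + d)) (by rw [abs_neg, habs])
    rw [hv] at this
    simp only [map_zero, Finsupp.zero_apply] at this
    rcases mul_eq_zero.mp this.symm with h | h
    · exact absurd h hPd
    · exact h
  rcases (hiter d).2 with h | h
  · exact h h1
  · exact h h2
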